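/- The maximum cardinality of a 5-progression-free subset of F_5^2 is exactly 16: there exists a 5-progression-free subset of F_5^2 with 16 elements, and every 5-progression-free subset of F_5^2 has at most 16 elements. -/

import Mathlib

open MvPolynomial Finset

/-- A subset `S` of `F_p^n` is `k`-progression-free if there are no `a, d` with `d ≠ 0`
such that `a + i • d ∈ S` for all `i ∈ {0, …, k-1}`. -/
def ProgFree (p n k : ℕ) (S : Finset (Fin n → ZMod p)) : Prop :=
  ¬ ∃ a d : Fin n → ZMod p, d ≠ 0 ∧ ∀ i : ℕ, i < k → a + (i : ZMod p) • d ∈ S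

instance : Fact (Nat.Prime 5) := ⟨by norm_num⟩

-- blocking lemma
lemma blocking {S : Finset (Fin 2 → ZMod 5)} (hS : ProgFree 5 2 5 S)
    (a : Fin 2 → ZMod 5) (ha : a ≠ 0) (c : ZMod 5) :
    ∃ t : Fin 2 → ZMod 5, t ∉ S ∧ a 0 * t 0 + a 1 * t 1 = c := by
  -- direction d = (a 1, -a 0)
  set d : Fin 2 → ZMod 5 := ![a 1, -(a 0)] with hd
  have hdne : d ≠ 0 := by
    intro h
    apply ha
    funext j
    fin_cases j
    · have := congrFun h 1
      simpa [hd] using this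
    · have := congrFun h 0
      simpa [hd] using this
  -- particular solution p
  obtain ⟨p, hp⟩ : ∃ p : Fin 2 → ZMod 5, a 0 * p 0 + a 1 * p 1 = c := by
    by_cases h0 : a 0 = 0
    · have h1 : a 1 ≠ 0 := by
        intro h1; apply ha; funext j; fin_cases j <;> simp [h0, h1]
      exact ⟨![0, c / a 1], by simp [h0]; field_simp⟩
    · exact ⟨![c / a 0, 0], by simp; field_simp⟩
  have := hS
  unfold ProgFree at this
  push_neg at this
  obtain ⟨i, hi5, hiS⟩ := this p d hdne
  refine ⟨p + (i : ZMod 5) • d, hiS, ?_⟩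
  simp [hd, Pi.add_apply, Pi.smul_apply, smul_eq_mul]
  ring_nf
  linear_combination hp

lemma upper {S : Finset (Fin 2 → ZMod 5)} (hS : ProgFree 5 2 5 S) : S.card ≤ 16 := by
  by_contra hc
  push_neg at hc
  -- complement T
  set T : Finset (Fin 2 → ZMod 5) := Sᶜ with hT
  have hcard25 : Fintype.card (Fin 2 → ZMod 5) = 25 := by simp
  have hTcard : T.card = 25 - S.card := by
    rw [hT, Finset.card_compl, hcard25]
  have hScard : S.card ≤ 25 := hcard25 ▸ Finset.card_le_univ S
  have hTle : T.card ≤ 8 := by omega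
  have hTne : T.Nonempty := by
    rw [Finset.nonempty_iff_ne_empty]
    intro h
    have hSuniv : S = Finset.univ := by
      rwa [hT, Finset.compl_eq_empty_iff] at h
    exact hS ⟨0, fun _ => 1,
      fun hcon => one_ne_zero (congrFun hcon 0),
      fun i _ => hSuniv ▸ Finset.mem_univ _⟩
  obtain ⟨t0, ht0⟩ := hTne
  -- the polynomial
  set f : MvPolynomial (Fin 2) (ZMod 5) :=
    ∏ t ∈ T.erase t0, (1 - (C ((t - t0) 0) * X 0 + C ((t - t0) 1) * X 1)) with hf
  have hfac : ∀ u v : ZMod 5,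
      ((1 : MvPolynomial (Fin 2) (ZMod 5)) - (C u * X 0 + C v * X 1)).totalDegree ≤ 1 := by
    intro u v
    refine (totalDegree_sub _ _).trans ?_
    simp only [totalDegree_one, Nat.max_le, Nat.zero_le, true_and]
    refine (totalDegree_add _ _).trans ?_
    simp only [Nat.max_le]
    constructor <;>
      · refine (totalDegree_mul _ _).trans ?_
        rw [totalDegree_C, totalDegree_X]
  have hdeg : f.totalDegree ≤ 7 := by
    have h1 := totalDegree_finset_prod (T.erase t0)
      (fun t => (1 : MvPolynomial (Fin 2) (ZMod 5))
        - (C ((t - t0) 0) * X 0 + C ((t - t0) 1) * X 1))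
    have h2 := Finset.sum_le_card_nsmul (T.erase t0)
      (fun t => ((1 : MvPolynomial (Fin 2) (ZMod 5))
        - (C ((t - t0) 0) * X 0 + C ((t - t0) 1) * X 1)).totalDegree) 1
      (fun t _ => hfac _ _)
    simp only [smul_eq_mul, mul_one] at h2
    have h3 : (T.erase t0).card < T.card := Finset.card_erase_lt_of_mem ht0
    rw [hf]
    omega
  have heval : ∀ a : Fin 2 → ZMod 5, eval a f = ∏ t ∈ T.erase t0,
      (1 - ((t - t0) 0 * a 0 + (t - t0) 1 * a 1)) := by
    intro a; rw [hf]; simp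
  have heval0 : eval 0 f = 1 := by
    rw [heval]; simp
  have hevalne : ∀ a : Fin 2 → ZMod 5, a ≠ 0 → eval a f = 0 := by
    intro a ha
    obtain ⟨t, htS, htc⟩ := blocking hS a ha (a 0 * t0 0 + a 1 * t0 1 + 1)
    have htT : t ∈ T := by simp [hT, htS]
    have htne : t ≠ t0 := by
      intro h; rw [h] at htc
      have : (1 : ZMod 5) = 0 := by linear_combination -htc
      exact one_ne_zero this
    rw [heval]
    apply Finset.prod_eq_zero (Finset.mem_erase.2 ⟨htne, htT⟩)
    have : (t - t0) 0 * a 0 + (t - t0) 1 * a 1 = 1 := by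
      simp only [Pi.sub_apply]
      linear_combination htc
    rw [this]; simp
  have hsum : ∑ a : Fin 2 → ZMod 5, eval a f = 0 := by
    apply MvPolynomial.sum_eval_eq_zero
    have : Fintype.card (ZMod 5) = 5 := by simp
    rw [this]
    simp only [Fintype.card_fin]
    omega
  have hsum1 : ∑ a : Fin 2 → ZMod 5, eval a f = 1 := by
    rw [Fintype.sum_eq_single (0 : Fin 2 → ZMod 5) hevalne, heval0]
  rw [hsum1] at hsum
  exact one_ne_zero hsum

theorem stmt_14 :
    (∃ S : Finset (Fin 2 → ZMod 5), ProgFree 5 2 5 S ∧ S.card = 16) ∧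
    (∀ S : Finset (Fin 2 → ZMod 5), ProgFree 5 2 5 S → S.card ≤ 16) := by
  constructor
  · refine ⟨Finset.univ.filter (fun v => v 0 ≠ 0 ∧ v 1 ≠ 0), ?_, ?_⟩
    · rintro ⟨a, d, hd, hmem⟩
      obtain ⟨j, hj⟩ : ∃ j, d j ≠ 0 := by
        by_contra h
        push_neg at h
        exact hd (funext h)
      set c : ZMod 5 := -(a j) / d j with hc
      have hcd : a j + c * d j = 0 := by
        rw [hc]; field_simp; ring
      have h5 : c.val < 5 := c.val_lt
      have := hmem c.val h5
      rw [ZMod.natCast_val, ZMod.cast_id] at this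
      have hmem2 := (Finset.mem_filter.1 this).2
      have : (a + c • d) j = 0 := by
        simpa [Pi.add_apply, Pi.smul_apply, smul_eq_mul] using hcd
      fin_cases j
      · exact hmem2.1 this
      · exact hmem2.2 this
    · decide
  · exact fun S hS => upper hS
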